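/- Fix a bounded function F₀ : ℝ → ℝ and n ≥ 1, and define T(x) = inf_{(m,s) ∈ ℝ×(0,∞)} sup_{t∈ℝ} |F̂_x(t) − F₀((t−m)/s)| for x ∈ ℝⁿ; assume T : ℝⁿ → ℝ is Borel measurable. Let μ be a Borel probability measure on ℝ, let m₀ ∈ ℝ and s₀ > 0, and let μ' be the pushforward of μ under the map t ↦ s₀·t + m₀. Then the pushforward of the n-fold product measure μ^{⊗n} under T equals the pushforward of (μ')^{⊗n} under T; i.e., the distribution of T under i.i.d. sampling is the same for all members of the location-scale family generated by μ. -/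

import Mathlib

open MeasureTheory Filter

/-- Empirical cdf of a sample `x : Fin n → ℝ`. -/
noncomputable def ecdf {n : ℕ} (x : Fin n → ℝ) (t : ℝ) : ℝ :=
  (Finset.univ.filter (fun i => x i ≤ t)).card / n

/-- Minimum Kolmogorov–Smirnov statistic over the location-scale family generated by `F₀`. -/
noncomputable def minKS {n : ℕ} (F₀ : ℝ → ℝ) (x : Fin n → ℝ) : ℝ :=
  ⨅ m : ℝ, ⨅ s : Set.Ioi (0 : ℝ), ⨆ t : ℝ, |ecdf x t - F₀ ((t - m) / (s : ℝ))|

lemma ecdf_affine {n : ℕ} (x : Fin n → ℝ) (s₀ m₀ t : ℝ) (hs₀ : 0 < s₀) :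
    ecdf (fun i => s₀ * x i + m₀) t = ecdf x ((t - m₀) / s₀) := by
  unfold ecdf
  congr 3
  apply Finset.filter_congr
  intro i _
  simp only [eq_iff_iff]
  simp only [le_div_iff₀ hs₀]
  constructor <;> intro h <;> nlinarith

lemma minKS_affine {n : ℕ} (F₀ : ℝ → ℝ) (x : Fin n → ℝ) (s₀ m₀ : ℝ) (hs₀ : 0 < s₀) :
    minKS F₀ (fun i => s₀ * x i + m₀) = minKS F₀ x := by
  unfold minKS
  have hmsurj : Function.Surjective (fun m : ℝ => s₀ * m + m₀) := by
    intro y; exact ⟨(y - m₀) / s₀, by field_simp; ring⟩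
  have htsurj : Function.Surjective (fun t : ℝ => s₀ * t + m₀) := hmsurj
  have hssurj : Function.Surjective (fun s : Set.Ioi (0 : ℝ) =>
      (⟨s₀ * s, mul_pos hs₀ s.2⟩ : Set.Ioi (0 : ℝ))) := by
    rintro ⟨y, hy⟩
    exact ⟨⟨y / s₀, div_pos hy hs₀⟩, by ext; simp; field_simp⟩
  rw [← hmsurj.iInf_comp]
  refine iInf_congr fun m => ?_
  rw [← hssurj.iInf_comp]
  refine iInf_congr fun s => ?_
  rw [← htsurj.iSup_comp]
  refine iSup_congr fun t => ?_
  rw [ecdf_affine x s₀ m₀ _ hs₀]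
  have h1 : (s₀ * t + m₀ - m₀) / s₀ = t := by field_simp; ring
  have h2 : (s₀ * t + m₀ - (s₀ * m + m₀)) / (s₀ * s) = (t - m) / s := by
    have hs : (0:ℝ) < (s : ℝ) := s.2
    rw [div_eq_div_iff (by positivity) (by positivity)]
    ring
  rw [h1, h2]

theorem minKS_distribution_free {n : ℕ} (hn : 1 ≤ n)
    (F₀ : ℝ → ℝ) (hF₀ : ∃ C : ℝ, ∀ t, |F₀ t| ≤ C)
    (hTmeas : Measurable (minKS (n := n) F₀))
    (μ : Measure ℝ) [IsProbabilityMeasure μ] (m₀ : ℝ) (s₀ : ℝ) (hs₀ : 0 < s₀) :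
    Measure.map (minKS F₀) (Measure.pi fun _ : Fin n => μ) =
      Measure.map (minKS F₀)
        (Measure.pi fun _ : Fin n => Measure.map (fun t => s₀ * t + m₀) μ) := by
  have hf : Measurable (fun t : ℝ => s₀ * t + m₀) := by fun_prop
  have : IsProbabilityMeasure (Measure.map (fun t : ℝ => s₀ * t + m₀) μ) :=
    Measure.isProbabilityMeasure_map hf.aemeasurable
  have hmp : MeasurePreserving (fun a : Fin n → ℝ => fun i => s₀ * a i + m₀)
      (Measure.pi fun _ : Fin n => μ)
      (Measure.pi fun _ : Fin n => Measure.map (fun t => s₀ * t + m₀) μ) :=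
    measurePreserving_pi _ _ (fun i => ⟨hf, rfl⟩)
  rw [← hmp.map_eq, Measure.map_map hTmeas hmp.measurable]
  congr 1
  funext x
  exact (minKS_affine F₀ x s₀ m₀ hs₀).symm
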